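/- For every ε > 0 there exists D > 0 such that the following holds. Let G be a finite triangle-free simple graph on n ≥ 1 vertices whose degree sequence has geometric mean at least D, i.e. (Π_{v∈V(G)} deg(v))^{1/n} ≥ D. Then there exist disjoint sets A, B ⊆ V(G) with A independent in G, A ∪ B ≠ ∅, and 2·e_G(A,B)/(|A|+|B|) ≥ (2−ε)·(1/n)·Σ_{v∈V(G)} log deg(v), where e_G(A,B) is the number of edges of G with one endpoint in A and the other in B. -/

import Mathlib

open Finset
set_option maxHeartbeats 1000000

/-- A finite set of vertices is independent in `G`. -/
def IndepFinset {V : Type*} (G : SimpleGraph V) (s : Finset V) : Prop :=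
  ∀ u ∈ s, ∀ v ∈ s, ¬ G.Adj u v

lemma sum_powerset_pow_card {V : Type*} [DecidableEq V] (F : Finset V) (x : ℝ) :
    ∑ S ∈ F.powerset, x ^ S.card = (1 + x) ^ F.card := by
  induction F using Finset.induction_on with
  | empty => simp
  | @insert a s ha ih =>
    rw [Finset.sum_powerset_insert ha, Finset.card_insert_of_notMem ha]
    have h : ∀ t ∈ s.powerset, x ^ (insert a t).card = x * x ^ t.card := by
      intro t ht
      rw [Finset.card_insert_of_notMem (fun hat => ha (Finset.mem_powerset.1 ht hat))]
      ring
    rw [Finset.sum_congr rfl h, ← Finset.mul_sum, ih]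
    ring

lemma sum_powerset_card_pow_card {V : Type*} [DecidableEq V] (F : Finset V) (x : ℝ) :
    (1 + x) * ∑ S ∈ F.powerset, (S.card : ℝ) * x ^ S.card
      = (F.card : ℝ) * x * (1 + x) ^ F.card := by
  induction F using Finset.induction_on with
  | empty => simp
  | @insert a s ha ih =>
    rw [Finset.sum_powerset_insert ha, Finset.card_insert_of_notMem ha]
    have h : ∀ t ∈ s.powerset,
        ((insert a t).card : ℝ) * x ^ (insert a t).card
          = ((t.card : ℝ) + 1) * (x * x ^ t.card) := by
      intro t ht
      rw [Finset.card_insert_of_notMem (fun hat => ha (Finset.mem_powerset.1 ht hat))]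
      push_cast; ring
    rw [Finset.sum_congr rfl h]
    have expand : ∑ t ∈ s.powerset, ((t.card : ℝ) + 1) * (x * x ^ t.card)
        = x * (∑ t ∈ s.powerset, (t.card : ℝ) * x ^ t.card)
          + x * ∑ t ∈ s.powerset, x ^ t.card := by
      rw [Finset.mul_sum, Finset.mul_sum, ← Finset.sum_add_distrib]
      exact Finset.sum_congr rfl (fun t _ => by ring)
    rw [mul_add, expand, sum_powerset_pow_card]
    push_cast
    linear_combination (1+x) * ih

lemma analytic_main (ε : ℝ) (hε : 0 < ε) (hε1 : ε ≤ 1) :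
    ∃ D₁ : ℝ, 1 ≤ D₁ ∧ ∀ d : ℝ, D₁ ≤ d → ∀ k : ℕ,
      (1 - ε/4) * Real.log d * (ε/32 + (1 + ε/32) ^ k)
        ≤ (ε/32) * d * (ε/32)
          + (1 - ε/32) * ((k : ℝ) * (ε/32) * (1 + ε/32) ^ k / (1 + ε/32)) := by
  set l : ℝ := ε/32 with hldef
  have hl0 : 0 < l := by positivity
  have hl1 : l ≤ 1/32 := by rw [hldef]; linarith
  have hbase : (0:ℝ) ≤ (2*l+1)/(l*l) := by positivity
  refine ⟨max 1 (((2*l+1)/(l*l)) ^ ((8:ℝ)/ε)), le_max_left _ _, ?_⟩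
  intro d hd k
  have hd1 : (1:ℝ) ≤ d := le_trans (le_max_left _ _) hd
  have hd0 : (0:ℝ) < d := lt_of_lt_of_le one_pos hd1
  have hlogd : 0 ≤ Real.log d := Real.log_nonneg hd1
  -- Step A : (2l+1)/(l*l) ≤ d^(ε/8)
  have hpow : ((2*l+1)/(l*l)) ≤ d ^ (ε/8 : ℝ) := by
    have h1 : ((2*l+1)/(l*l)) ^ ((8:ℝ)/ε) ≤ d := le_trans (le_max_right _ _) hd
    have h2 : ((2*l+1)/(l*l)) = (((2*l+1)/(l*l)) ^ ((8:ℝ)/ε)) ^ (ε/8:ℝ) := by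
      rw [← Real.rpow_mul hbase]
      have : (8:ℝ)/ε * (ε/8) = 1 := by field_simp
      rw [this, Real.rpow_one]
    rw [h2]
    exact Real.rpow_le_rpow (Real.rpow_nonneg hbase _) h1 (by positivity)
  -- Step A' : l * log d + d^(1-ε/8) ≤ l * l * d
  have hkey : l * Real.log d + d ^ (1 - ε/8 : ℝ) ≤ l * l * d := by
    have hsq : Real.log d ≤ 2 * d ^ ((1:ℝ)/2) := by
      have h := Real.log_le_sub_one_of_pos (Real.sqrt_pos.2 hd0)
      rw [Real.log_sqrt hd0.le, Real.sqrt_eq_rpow d] at h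
      have hp : (0:ℝ) ≤ d ^ ((1:ℝ)/2) := by positivity
      linarith
    have hmono : d ^ ((1:ℝ)/2) ≤ d ^ (1 - ε/8 : ℝ) :=
      Real.rpow_le_rpow_of_exponent_le hd1 (by linarith)
    have hpos2 : (0:ℝ) < d ^ (1 - ε/8 : ℝ) := Real.rpow_pos_of_pos hd0 _
    have hprod : (2*l+1) * d ^ (1 - ε/8:ℝ) ≤ l*l*d := by
      have h3 : (2*l+1) ≤ d ^ (ε/8:ℝ) * (l*l) := by
        rw [div_le_iff₀ (by positivity)] at hpow; linarith
      have h4 : (2*l+1) * d ^ (1 - ε/8:ℝ) ≤ (d ^ (ε/8:ℝ) * (l*l)) * d ^ (1 - ε/8:ℝ) :=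
        mul_le_mul_of_nonneg_right h3 hpos2.le
      have h5 : d ^ (ε/8:ℝ) * d ^ (1 - ε/8:ℝ) = d := by
        rw [← Real.rpow_add hd0]
        norm_num
      calc (2*l+1) * d ^ (1 - ε/8:ℝ) ≤ (d ^ (ε/8:ℝ) * (l*l)) * d ^ (1 - ε/8:ℝ) := h4
        _ = l*l*(d ^ (ε/8:ℝ) * d ^ (1 - ε/8:ℝ)) := by ring
        _ = l*l*d := by rw [h5]
    nlinarith [hsq, hmono, hl0]
  -- Step B : per-k inequality
  set t : ℝ := (1+l)^k with htdef
  have ht1 : (1:ℝ) ≤ t := one_le_pow₀ (by linarith)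
  have ht0 : (0:ℝ) < t := lt_of_lt_of_le one_pos ht1
  have hlt : 0 < Real.log (1+l) := Real.log_pos (by linarith)
  have hllel : Real.log (1+l) ≤ l := by
    have := Real.log_le_sub_one_of_pos (show (0:ℝ) < 1+l by linarith)
    linarith
  have hlgel : l/(1+l) ≤ Real.log (1+l) := by
    have h := Real.log_le_sub_one_of_pos (show (0:ℝ) < (1+l)⁻¹ by positivity)
    rw [Real.log_inv] at h
    have h2 : (1+l)⁻¹ - 1 = -(l/(1+l)) := by field_simp; ring
    linarith [h, h2.le]
  set c : ℝ := (1 - ε/4) * Real.log d with hcdef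
  have hc0 : 0 ≤ c := mul_nonneg (by linarith) hlogd
  have hcled : c ≤ Real.log d := by nlinarith
  set β : ℝ := (1-l)*l/((1+l)*Real.log (1+l)) with hβdef
  have hβ0 : 0 < β := by
    apply div_pos (mul_pos (by linarith) hl0) (mul_pos (by linarith) hlt)
  have hβ1 : β ≤ 1 := by
    rw [hβdef, div_le_one (mul_pos (by linarith) hlt)]
    have h := mul_le_mul_of_nonneg_left hlgel (show (0:ℝ) ≤ 1+l by linarith)
    have h2 : (1+l) * (l/(1+l)) = l := by field_simp
    nlinarith
  have hlogt : Real.log t = (k:ℝ) * Real.log (1+l) := by rw [htdef, Real.log_pow]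
  have hmid : (1-l) * ((k:ℝ)*l*t/(1+l)) = β * (t * Real.log t) := by
    rw [hlogt, hβdef]
    field_simp
  have hcβ : c / β ≤ (1 - ε/8) * Real.log d := by
    rw [div_le_iff₀ hβ0]
    have hβlb : (1-l)/(1+l) ≤ β := by
      rw [hβdef, div_le_div_iff₀ (by linarith) (mul_pos (by linarith) hlt)]
      have hmul := mul_le_mul_of_nonneg_left hllel
        (show (0:ℝ) ≤ (1-l)*(1+l) by nlinarith)
      have hre : (1-l)*((1+l)*Real.log (1+l)) = (1-l)*(1+l)*Real.log (1+l) := by ring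
      have hre2 : (1-l)*(1+l)*l = (1-l)*l*(1+l) := by ring
      linarith [hmul, hre.le, hre.ge]
    have hstep : (1 - ε/4) * (1+l) ≤ (1 - ε/8) * (1-l) := by
      simp only [hldef]; nlinarith
    have hβlb' : (1 - ε/4) ≤ (1 - ε/8) * β := by
      have h6 : (1 - ε/8) * ((1-l)/(1+l)) ≤ (1 - ε/8) * β :=
        mul_le_mul_of_nonneg_left hβlb (by linarith)
      have h7 : (1 - ε/4) ≤ (1 - ε/8) * ((1-l)/(1+l)) := by
        rw [mul_div_assoc', le_div_iff₀ (show (0:ℝ) < 1+l by linarith)]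
        linarith [hstep]
      linarith [h6, h7]
    calc c = (1 - ε/4) * Real.log d := hcdef
      _ ≤ ((1 - ε/8) * β) * Real.log d := mul_le_mul_of_nonneg_right hβlb' hlogd
      _ = (1 - ε/8) * Real.log d * β := by ring
  set E : ℝ := Real.exp (c/β) with hEdef
  have hE0 : 0 < E := Real.exp_pos _
  have hEled : E ≤ d ^ (1 - ε/8 : ℝ) := by
    rw [Real.rpow_def_of_pos hd0]
    apply Real.exp_le_exp.2
    calc c/β ≤ (1 - ε/8) * Real.log d := hcβ
      _ = Real.log d * (1 - ε/8) := by ring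
  set s : ℝ := t / E with hsdef
  have hs0 : 0 < s := div_pos ht0 hE0
  have hslns : s - 1 ≤ s * Real.log s := by
    have h := Real.log_le_sub_one_of_pos (inv_pos.2 hs0)
    rw [Real.log_inv] at h
    have hinv : s * s⁻¹ = 1 := mul_inv_cancel₀ (ne_of_gt hs0)
    nlinarith [mul_le_mul_of_nonneg_left h hs0.le]
  have hlogs : Real.log s = Real.log t - c/β := by
    rw [hsdef, Real.log_div (ne_of_gt ht0) (ne_of_gt hE0), hEdef, Real.log_exp]
  have hts : t = E * s := by rw [hsdef]; field_simp
  have hkey2 : c * t - E ≤ β * (t * Real.log t) := by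
    have h1 : β * (t * Real.log t) = β * E * (s * Real.log s) + c * t := by
      have hlt2 : Real.log t = Real.log s + c/β := by rw [hlogs]; ring
      rw [hlt2]
      rw [hts]
      field_simp
    rw [h1]
    have h2 : β * E * (s - 1) ≤ β * E * (s * Real.log s) :=
      mul_le_mul_of_nonneg_left hslns (by positivity)
    nlinarith [hts, hβ1, hβ0.le, hE0.le, ht0.le]
  -- final combination
  have hgoal : c * (l + t) ≤ l * d * l + (1-l) * ((k:ℝ)*l*t/(1+l)) := by
    rw [hmid]
    have h8 : c * l ≤ Real.log d * l := mul_le_mul_of_nonneg_right hcled hl0.le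
    nlinarith [hkey, hkey2, hEled]
  calc (1 - ε/4) * Real.log d * (l + (1+l)^k) = c * (l + t) := by rw [hcdef, htdef]
    _ ≤ l * d * l + (1-l) * ((k:ℝ)*l*t/(1+l)) := hgoal
    _ = l * d * l + (1 - l) * ((k:ℝ) * l * (1+l)^k / (1+l)) := by rw [htdef]

variable {V : Type} [Fintype V] [DecidableEq V] (G : SimpleGraph V) [DecidableRel G.Adj]

def indSets : Finset (Finset V) :=
  Finset.univ.filter (fun I => ∀ u ∈ I, ∀ w ∈ I, ¬ G.Adj u w)

lemma mem_indSets {I : Finset V} :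
    I ∈ indSets G ↔ ∀ u ∈ I, ∀ w ∈ I, ¬ G.Adj u w := by
  simp [indSets]

def freeNbrs (v : V) (J : Finset V) : Finset V :=
  (G.neighborFinset v).filter (fun u => ∀ w ∈ J, ¬ G.Adj u w)

lemma fiber_eq (h3 : G.CliqueFree 3) (v : V) (J : Finset V)
    (hJind : J ∈ indSets G)
    (hJdisj : Disjoint J (insert v (G.neighborFinset v))) :
    (indSets G).filter (fun I => I \ (insert v (G.neighborFinset v)) = J)
      = insert (insert v J) (((freeNbrs G v J).powerset).image (J ∪ ·)) := by
  have hJI := (mem_indSets G).1 hJind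
  have hvJ : v ∉ J := fun hv => (Finset.disjoint_left.1 hJdisj hv) (mem_insert_self v _)
  have hJN : ∀ a ∈ J, a ∉ G.neighborFinset v := fun a ha hN =>
    (Finset.disjoint_left.1 hJdisj ha) (mem_insert_of_mem hN)
  ext I
  simp only [Finset.mem_filter, mem_indSets, Finset.mem_insert, Finset.mem_image,
    Finset.mem_powerset]
  constructor
  · rintro ⟨hind, hsd⟩
    by_cases hv : v ∈ I
    · left
      ext a
      simp only [Finset.mem_insert]
      constructor
      · intro ha
        by_cases hav : a = v
        · exact Or.inl hav
        · right
          rw [← hsd]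
          simp only [Finset.mem_sdiff, Finset.mem_insert, SimpleGraph.mem_neighborFinset]
          exact ⟨ha, fun h => h.elim hav (fun hadj => hind v hv a ha hadj)⟩
      · rintro (rfl | ha)
        · exact hv
        · rw [← hsd] at ha; exact (Finset.mem_sdiff.1 ha).1
    · right
      refine ⟨I ∩ G.neighborFinset v, ?_, ?_⟩
      · intro u hu
        simp only [Finset.mem_inter] at hu
        simp only [freeNbrs, Finset.mem_filter]
        refine ⟨hu.2, fun w hw hadj => ?_⟩
        have hwI : w ∈ I := by rw [← hsd] at hw; exact (Finset.mem_sdiff.1 hw).1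
        exact hind u hu.1 w hwI hadj
      · ext a
        simp only [Finset.mem_union, Finset.mem_inter]
        constructor
        · rintro (ha | ha)
          · rw [← hsd] at ha; exact (Finset.mem_sdiff.1 ha).1
          · exact ha.1
        · intro ha
          by_cases haN : a ∈ G.neighborFinset v
          · exact Or.inr ⟨ha, haN⟩
          · left
            rw [← hsd]
            simp only [Finset.mem_sdiff, Finset.mem_insert]
            exact ⟨ha, fun h => h.elim (fun h' => hv (h' ▸ ha)) haN⟩
  · rintro (rfl | ⟨S, hS, rfl⟩)
    · constructor
      · intro u hu w hw hadj
        simp only [Finset.mem_insert] at hu hw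
        rcases hu with rfl | hu
        · rcases hw with rfl | hw
          · exact G.irrefl hadj
          · exact hJN w hw ((SimpleGraph.mem_neighborFinset G u w).2 hadj)
        · rcases hw with rfl | hw
          · exact hJN u hu ((SimpleGraph.mem_neighborFinset G w u).2 hadj.symm)
          · exact hJI u hu w hw hadj
      · ext a
        simp only [Finset.mem_sdiff, Finset.mem_insert]
        constructor
        · rintro ⟨rfl | ha, hn⟩
          · exact absurd (Or.inl rfl) hn
          · exact ha
        · intro ha
          exact ⟨Or.inr ha, fun h => h.elim
            (fun h' => hvJ (h' ▸ ha)) (fun h' => hJN a ha h')⟩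
    · have hSN : ∀ u ∈ S, u ∈ G.neighborFinset v := fun u hu =>
        (Finset.mem_filter.1 (hS hu)).1
      have hSfree : ∀ u ∈ S, ∀ w ∈ J, ¬ G.Adj u w := fun u hu =>
        (Finset.mem_filter.1 (hS hu)).2
      constructor
      · intro u hu w hw hadj
        simp only [Finset.mem_union] at hu hw
        rcases hu with hu | hu
        · rcases hw with hw | hw
          · exact hJI u hu w hw hadj
          · exact hSfree w hw u hu hadj.symm
        · rcases hw with hw | hw
          · exact hSfree u hu w hw hadj
          · -- both in S ⊆ N(v) : triangle
            have h1 : G.Adj v u := (SimpleGraph.mem_neighborFinset G v u).1 (hSN u hu)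
            have h2 : G.Adj v w := (SimpleGraph.mem_neighborFinset G v w).1 (hSN w hw)
            exact h3 {v, u, w} (SimpleGraph.is3Clique_triple_iff.2 ⟨h1, h2, hadj⟩)
      · ext a
        simp only [Finset.mem_sdiff, Finset.mem_union, Finset.mem_insert]
        constructor
        · rintro ⟨ha | ha, hn⟩
          · exact ha
          · exact absurd (Or.inr (hSN a ha)) hn
        · intro ha
          exact ⟨Or.inl ha, fun h => h.elim
            (fun h' => hvJ (h' ▸ ha)) (fun h' => hJN a ha h')⟩

lemma fiber_decomp (h3 : G.CliqueFree 3) (v : V) (f : Finset V → ℝ) :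
    ∑ I ∈ indSets G, f I
      = ∑ J ∈ (indSets G).filter
          (fun J => Disjoint J (insert v (G.neighborFinset v))),
          (f (insert v J) + ∑ S ∈ (freeNbrs G v J).powerset, f (J ∪ S)) := by
  have hmaps : ∀ I ∈ indSets G,
      I \ (insert v (G.neighborFinset v)) ∈ (indSets G).filter
        (fun J => Disjoint J (insert v (G.neighborFinset v))) := by
    intro I hI
    rw [Finset.mem_filter]
    refine ⟨?_, Finset.sdiff_disjoint⟩
    rw [mem_indSets] at hI ⊢
    intro u hu w hw
    exact hI u (Finset.mem_sdiff.1 hu).1 w (Finset.mem_sdiff.1 hw).1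
  rw [← Finset.sum_fiberwise_of_maps_to hmaps f]
  apply Finset.sum_congr rfl
  intro J hJ
  rw [Finset.mem_filter] at hJ
  obtain ⟨hJind, hJdisj⟩ := hJ
  rw [fiber_eq G h3 v J hJind hJdisj]
  have hvJ : v ∉ J := fun hv => (Finset.disjoint_left.1 hJdisj hv) (mem_insert_self v _)
  have hmem : insert v J ∉ ((freeNbrs G v J).powerset).image (J ∪ ·) := by
    intro hmem
    obtain ⟨S, hS, hEq⟩ := Finset.mem_image.1 hmem
    have hv : v ∈ J ∪ S := hEq ▸ Finset.mem_insert_self v J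
    rcases Finset.mem_union.1 hv with h | h
    · exact hvJ h
    · have := (Finset.mem_filter.1 (Finset.mem_powerset.1 hS h)).1
      exact G.irrefl ((SimpleGraph.mem_neighborFinset G v v).1 this)
  rw [Finset.sum_insert hmem]
  congr 1
  apply Finset.sum_image
  intro S₁ h₁ S₂ h₂ hEq
  have hdisj : ∀ S ⊆ freeNbrs G v J, Disjoint J S := by
    intro S hS
    rw [Finset.disjoint_right]
    intro a haS haJ
    have : a ∈ G.neighborFinset v := (Finset.mem_filter.1 (hS haS)).1
    exact (Finset.disjoint_left.1 hJdisj haJ) (mem_insert_of_mem this)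
  have e1 : S₁ = (J ∪ S₁) \ J := by
    rw [Finset.union_sdiff_cancel_left (hdisj S₁ (Finset.mem_powerset.1 h₁))]
  have e2 : S₂ = (J ∪ S₂) \ J := by
    rw [Finset.union_sdiff_cancel_left (hdisj S₂ (Finset.mem_powerset.1 h₂))]
  rw [e1, e2, show J ∪ S₁ = J ∪ S₂ from hEq]

lemma perv (h3 : G.CliqueFree 3) (l : ℝ) (hl0 : 0 < l) (hl1 : l < 1) (v : V) (c : ℝ)
    (hAL : ∀ k : ℕ, c * (l + (1+l)^k)
      ≤ l * (G.degree v) * l + (1-l) * ((k:ℝ)*l*(1+l)^k/(1+l))) :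
    ∑ I ∈ indSets G, l^I.card * c
      ≤ ∑ I ∈ indSets G, l^I.card *
          (l * (G.degree v) * (if v ∈ I then 1 else 0)
            + (1-l) * ((I ∩ G.neighborFinset v).card : ℝ)) := by
  rw [fiber_decomp G h3 v (fun I => l^I.card * c),
    fiber_decomp G h3 v (fun I => l^I.card *
      (l * (G.degree v) * (if v ∈ I then 1 else 0)
        + (1-l) * ((I ∩ G.neighborFinset v).card : ℝ)))]
  apply Finset.sum_le_sum
  intro J hJ
  rw [Finset.mem_filter] at hJ
  obtain ⟨hJind, hJdisj⟩ := hJ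
  obtain ⟨hvJ, hJN⟩ := Finset.disjoint_insert_right.1 hJdisj
  have hvN : v ∉ G.neighborFinset v := by simp
  have hSsub : ∀ S ∈ (freeNbrs G v J).powerset, S ⊆ G.neighborFinset v := fun S hS =>
    subset_trans (Finset.mem_powerset.1 hS) (Finset.filter_subset _ _)
  have hins_card : (insert v J).card = J.card + 1 := Finset.card_insert_of_notMem hvJ
  have hins_cap : (insert v J) ∩ G.neighborFinset v = ∅ := by
    rw [Finset.eq_empty_iff_forall_notMem]
    intro a ha
    rw [Finset.mem_inter, Finset.mem_insert] at ha
    rcases ha.1 with rfl | haJ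
    · exact hvN ha.2
    · exact (Finset.disjoint_left.1 hJN haJ) ha.2
  have hJS_card : ∀ S ∈ (freeNbrs G v J).powerset, (J ∪ S).card = J.card + S.card := by
    intro S hS
    exact Finset.card_union_of_disjoint
      (Finset.disjoint_of_subset_right (hSsub S hS) hJN)
  have hJS_cap : ∀ S ∈ (freeNbrs G v J).powerset, (J ∪ S) ∩ G.neighborFinset v = S := by
    intro S hS
    ext a
    rw [Finset.mem_inter, Finset.mem_union]
    constructor
    · rintro ⟨haJ | haS, haN⟩
      · exact absurd haN (Finset.disjoint_left.1 hJN haJ)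
      · exact haS
    · intro ha
      exact ⟨Or.inr ha, hSsub S hS ha⟩
  have hvJS : ∀ S ∈ (freeNbrs G v J).powerset, v ∉ J ∪ S := by
    intro S hS hv
    rcases Finset.mem_union.1 hv with h | h
    · exact hvJ h
    · exact hvN (hSsub S hS h)
  -- compute the simpler forms of both sides
  have lhs_eq : (fun I => l^I.card * c) (insert v J)
        + ∑ S ∈ (freeNbrs G v J).powerset, (fun I => l^I.card * c) (J ∪ S)
      = l^J.card * (c * (l + (1+l)^(freeNbrs G v J).card)) := by
    simp only []
    rw [hins_card]
    have : ∑ S ∈ (freeNbrs G v J).powerset, l^(J ∪ S).card * c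
        = ∑ S ∈ (freeNbrs G v J).powerset, l^J.card * c * l^S.card := by
      apply Finset.sum_congr rfl
      intro S hS
      rw [hJS_card S hS, pow_add]
      ring
    rw [this, ← Finset.mul_sum, sum_powerset_pow_card, pow_add]
    ring
  have rhs_eq : (fun I => l^I.card *
          (l * (G.degree v) * (if v ∈ I then 1 else 0)
            + (1-l) * ((I ∩ G.neighborFinset v).card : ℝ))) (insert v J)
        + ∑ S ∈ (freeNbrs G v J).powerset, (fun I => l^I.card *
          (l * (G.degree v) * (if v ∈ I then 1 else 0)
            + (1-l) * ((I ∩ G.neighborFinset v).card : ℝ))) (J ∪ S)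
      = l^J.card * (l * (G.degree v) * l
          + (1-l) * (∑ S ∈ (freeNbrs G v J).powerset, (S.card : ℝ) * l^S.card)) := by
    simp only []
    rw [hins_card, hins_cap, if_pos (Finset.mem_insert_self v J)]
    have : ∑ S ∈ (freeNbrs G v J).powerset, l^(J ∪ S).card *
          (l * (G.degree v) * (if v ∈ J ∪ S then 1 else 0)
            + (1-l) * (((J ∪ S) ∩ G.neighborFinset v).card : ℝ))
        = ∑ S ∈ (freeNbrs G v J).powerset,
            l^J.card * ((1-l) * ((S.card : ℝ) * l^S.card)) := by
      apply Finset.sum_congr rfl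
      intro S hS
      rw [hJS_card S hS, hJS_cap S hS, if_neg (hvJS S hS), pow_add]
      ring
    rw [this, ← Finset.mul_sum, pow_add]
    simp only [Finset.card_empty, Nat.cast_zero]
    rw [← Finset.mul_sum]
    ring
  rw [lhs_eq, rhs_eq]
  apply mul_le_mul_of_nonneg_left _ (pow_nonneg hl0.le _)
  have hM : ∑ S ∈ (freeNbrs G v J).powerset, (S.card : ℝ) * l^S.card
      = ((freeNbrs G v J).card : ℝ) * l * (1+l)^(freeNbrs G v J).card / (1+l) := by
    have h := sum_powerset_card_pow_card (freeNbrs G v J) l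
    field_simp
    linarith [h]
  rw [hM]
  exact hAL (freeNbrs G v J).card

lemma sum_weight (I : Finset V) (l : ℝ) :
    ∑ v : V, (l * (G.degree v) * (if v ∈ I then 1 else 0)
        + (1-l) * ((I ∩ G.neighborFinset v).card : ℝ))
      = ∑ a ∈ I, (G.degree a : ℝ) := by
  have h1 : ∑ v : V, (G.degree v : ℝ) * (if v ∈ I then 1 else 0)
      = ∑ a ∈ I, (G.degree a : ℝ) := by
    have : ∀ v : V, (G.degree v : ℝ) * (if v ∈ I then 1 else 0)
        = if v ∈ I then (G.degree v : ℝ) else 0 := by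
      intro v; split <;> ring
    rw [Finset.sum_congr rfl (fun v _ => this v), Finset.sum_ite_mem, Finset.univ_inter]
  have h2 : ∑ v : V, ((I ∩ G.neighborFinset v).card : ℝ)
      = ∑ a ∈ I, (G.degree a : ℝ) := by
    have hnat : ∑ v : V, (I ∩ G.neighborFinset v).card = ∑ a ∈ I, G.degree a := by
      have e : ∀ v : V, (I ∩ G.neighborFinset v).card
          = ∑ a ∈ I, if G.Adj v a then 1 else 0 := by
        intro v
        rw [← Finset.filter_mem_eq_inter, Finset.card_filter]
        apply Finset.sum_congr rfl
        intro a _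
        congr 1
        simp [SimpleGraph.mem_neighborFinset]
      rw [Finset.sum_congr rfl (fun v _ => e v), Finset.sum_comm]
      apply Finset.sum_congr rfl
      intro a _
      rw [← Finset.card_filter]
      have : Finset.filter (fun v => G.Adj v a) Finset.univ = G.neighborFinset a := by
        rw [SimpleGraph.neighborFinset_eq_filter]
        apply Finset.filter_congr
        intro v _
        constructor
        · exact fun h => h.symm
        · exact fun h => h.symm
      rw [this, SimpleGraph.degree]
    calc ∑ v : V, ((I ∩ G.neighborFinset v).card : ℝ)
        = ((∑ v : V, (I ∩ G.neighborFinset v).card : ℕ) : ℝ) := by push_cast; rfl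
      _ = ((∑ a ∈ I, G.degree a : ℕ) : ℝ) := by rw [hnat]
      _ = ∑ a ∈ I, (G.degree a : ℝ) := by push_cast; rfl
  calc ∑ v : V, (l * (G.degree v) * (if v ∈ I then 1 else 0)
        + (1-l) * ((I ∩ G.neighborFinset v).card : ℝ))
      = l * (∑ v : V, (G.degree v : ℝ) * (if v ∈ I then 1 else 0))
        + (1-l) * ∑ v : V, ((I ∩ G.neighborFinset v).card : ℝ) := by
        rw [Finset.sum_add_distrib, Finset.mul_sum, Finset.mul_sum]
        congr 1
        · apply Finset.sum_congr rfl; intro v _; ring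
    _ = l * (∑ a ∈ I, (G.degree a : ℝ)) + (1-l) * ∑ a ∈ I, (G.degree a : ℝ) := by
        rw [h1, h2]
    _ = ∑ a ∈ I, (G.degree a : ℝ) := by ring

lemma main_aux (ε : ℝ) (hε : 0 < ε) (hε1 : ε ≤ 1) :
    ∃ D : ℝ, 0 < D ∧
      ∀ (V : Type) [Fintype V] [DecidableEq V] (G : SimpleGraph V) [DecidableRel G.Adj],
        G.CliqueFree 3 → 1 ≤ Fintype.card V →
        D ≤ (∏ v : V, (G.degree v : ℝ)) ^ ((1 : ℝ) / (Fintype.card V : ℝ)) →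
        ∃ A B : Finset V, Disjoint A B ∧ IndepFinset G A ∧ (A ∪ B).Nonempty ∧
          (2 - ε) * ((1 / (Fintype.card V : ℝ)) * ∑ v : V, Real.log (G.degree v)) ≤
            2 * (∑ a ∈ A, ((G.neighborFinset a ∩ B).card : ℝ)) /
              ((A.card : ℝ) + (B.card : ℝ)) := by
  obtain ⟨D₁, hD₁1, hAL⟩ := analytic_main ε hε hε1
  have hD₁0 : (0:ℝ) < D₁ := lt_of_lt_of_le one_pos hD₁1
  refine ⟨D₁ ^ ((8:ℝ)/ε), Real.rpow_pos_of_pos hD₁0 _, ?_⟩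
  intro V _ _ G _ h3 hn hGM
  have hn0 : (0:ℝ) < (Fintype.card V : ℝ) := by exact_mod_cast hn
  -- all degrees at least 1
  have hdeg : ∀ v : V, (1:ℝ) ≤ (G.degree v : ℝ) := by
    intro v
    by_contra h
    push_neg at h
    have h0 : (G.degree v : ℝ) = 0 := by
      have : G.degree v = 0 := by
        have : (G.degree v : ℝ) < 1 := h
        exact_mod_cast Nat.lt_one_iff.1 (by exact_mod_cast this)
      simp [this]
    have hprod : (∏ u : V, (G.degree u : ℝ)) = 0 :=
      Finset.prod_eq_zero (Finset.mem_univ v) h0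
    rw [hprod, Real.zero_rpow (one_div_ne_zero (ne_of_gt hn0))] at hGM
    exact absurd hGM (not_le.2 (Real.rpow_pos_of_pos hD₁0 _))
  have hdegpos : ∀ v : V, (0:ℝ) < (G.degree v : ℝ) :=
    fun v => lt_of_lt_of_le one_pos (hdeg v)
  have hlogv : ∀ v : V, 0 ≤ Real.log (G.degree v) := fun v => Real.log_nonneg (hdeg v)
  have hL0 : 0 ≤ ∑ v : V, Real.log (G.degree v) :=
    Finset.sum_nonneg (fun v _ => hlogv v)
  have hprodpos : 0 < ∏ v : V, (G.degree v : ℝ) :=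
    Finset.prod_pos (fun v _ => hdegpos v)
  -- L ≥ n * (8/ε) * log D₁
  have hLn : (Fintype.card V : ℝ) * ((8/ε) * Real.log D₁) ≤ ∑ v : V, Real.log (G.degree v) := by
    have h1 := Real.log_le_log (Real.rpow_pos_of_pos hD₁0 _) hGM
    rw [Real.log_rpow hprodpos, Real.log_rpow hD₁0] at h1
    have h2 : Real.log (∏ v : V, (G.degree v : ℝ)) = ∑ v : V, Real.log (G.degree v) :=
      Real.log_prod (fun v _ => ne_of_gt (hdegpos v))
    rw [h2] at h1
    have h3 := mul_le_mul_of_nonneg_left h1 hn0.le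
    calc (Fintype.card V : ℝ) * ((8/ε) * Real.log D₁)
        ≤ (Fintype.card V : ℝ) * (1 / (Fintype.card V : ℝ) * ∑ v : V, Real.log (G.degree v)) := h3
      _ = ∑ v : V, Real.log (G.degree v) := by field_simp
  have hl0 : (0:ℝ) < ε/32 := by positivity
  have hl1 : ε/32 < 1 := by linarith
  -- the per-vertex cutoff constants
  have hperv : ∀ v : V,
      ∑ I ∈ indSets G, (ε/32)^I.card *
        (if D₁ ≤ (G.degree v : ℝ) then (1 - ε/4) * Real.log (G.degree v) else 0)
      ≤ ∑ I ∈ indSets G, (ε/32)^I.card *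
          ((ε/32) * (G.degree v) * (if v ∈ I then 1 else 0)
            + (1-(ε/32)) * ((I ∩ G.neighborFinset v).card : ℝ)) := by
    intro v
    apply perv G h3 (ε/32) hl0 hl1 v _
    intro k
    by_cases hdv : D₁ ≤ (G.degree v : ℝ)
    · rw [if_pos hdv]
      exact hAL _ hdv k
    · rw [if_neg hdv, zero_mul]
      have t1 : (0:ℝ) ≤ (ε/32) * (G.degree v) * (ε/32) := by positivity
      have t2 : (0:ℝ) ≤ (1-(ε/32)) * ((k:ℝ)*(ε/32)*(1+(ε/32))^k/(1+(ε/32))) := by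
        apply mul_nonneg (by linarith)
        positivity
      linarith
  -- sum over all vertices
  have hsum : (∑ v : V, (if D₁ ≤ (G.degree v : ℝ) then (1 - ε/4) * Real.log (G.degree v) else 0))
        * (∑ I ∈ indSets G, (ε/32)^I.card)
      ≤ ∑ I ∈ indSets G, (ε/32)^I.card * (∑ a ∈ I, (G.degree a : ℝ)) := by
    have h1 := Finset.sum_le_sum (fun v (_ : v ∈ Finset.univ) => hperv v)
    rw [Finset.sum_comm, Finset.sum_comm
      (f := fun v I => (ε/32)^I.card *
          ((ε/32) * (G.degree v) * (if v ∈ I then 1 else 0)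
            + (1-(ε/32)) * ((I ∩ G.neighborFinset v).card : ℝ)))] at h1
    calc (∑ v : V, (if D₁ ≤ (G.degree v : ℝ) then (1 - ε/4) * Real.log (G.degree v) else 0))
          * (∑ I ∈ indSets G, (ε/32)^I.card)
        = ∑ I ∈ indSets G, ∑ v : V, (ε/32)^I.card *
            (if D₁ ≤ (G.degree v : ℝ) then (1 - ε/4) * Real.log (G.degree v) else 0) := by
          have e1 : (∑ v : V, (if D₁ ≤ (G.degree v : ℝ) then (1 - ε/4) * Real.log (G.degree v) else 0))
              * (∑ I ∈ indSets G, (ε/32)^I.card)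
              = ∑ v : V, ∑ I ∈ indSets G, (ε/32)^I.card *
                  (if D₁ ≤ (G.degree v : ℝ) then (1 - ε/4) * Real.log (G.degree v) else 0) := by
            rw [Finset.sum_mul]
            apply Finset.sum_congr rfl
            intro v _
            rw [Finset.mul_sum]
            apply Finset.sum_congr rfl
            intro I _
            ring
          rw [e1, Finset.sum_comm]
      _ ≤ ∑ I ∈ indSets G, ∑ v : V, (ε/32)^I.card *
            ((ε/32) * (G.degree v) * (if v ∈ I then 1 else 0)
              + (1-(ε/32)) * ((I ∩ G.neighborFinset v).card : ℝ)) := h1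
      _ = ∑ I ∈ indSets G, (ε/32)^I.card * (∑ a ∈ I, (G.degree a : ℝ)) := by
          apply Finset.sum_congr rfl
          intro I _
          rw [← Finset.mul_sum, sum_weight G I (ε/32)]
  -- existence of a good independent set
  have hne : (indSets G).Nonempty := ⟨∅, (mem_indSets G).2 (fun u hu => absurd hu (Finset.notMem_empty u))⟩
  have hex : ∃ I ∈ indSets G,
      (∑ v : V, (if D₁ ≤ (G.degree v : ℝ) then (1 - ε/4) * Real.log (G.degree v) else 0))
        ≤ ∑ a ∈ I, (G.degree a : ℝ) := by
    by_contra hcon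
    push_neg at hcon
    have hlt : ∑ I ∈ indSets G, (ε/32)^I.card * (∑ a ∈ I, (G.degree a : ℝ))
        < ∑ I ∈ indSets G, (ε/32)^I.card *
            (∑ v : V, (if D₁ ≤ (G.degree v : ℝ) then (1 - ε/4) * Real.log (G.degree v) else 0)) :=
      Finset.sum_lt_sum_of_nonempty hne
        (fun I hI => mul_lt_mul_of_pos_left (hcon I hI) (pow_pos hl0 _))
    have heq : ∑ I ∈ indSets G, (ε/32)^I.card *
          (∑ v : V, (if D₁ ≤ (G.degree v : ℝ) then (1 - ε/4) * Real.log (G.degree v) else 0))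
        = (∑ v : V, (if D₁ ≤ (G.degree v : ℝ) then (1 - ε/4) * Real.log (G.degree v) else 0))
          * (∑ I ∈ indSets G, (ε/32)^I.card) := by
      rw [Finset.mul_sum]
      apply Finset.sum_congr rfl
      intro I _
      ring
    linarith
  obtain ⟨A, hAind, hAw⟩ := hex
  -- lower bound the cutoff sum
  have hlD₁ : 0 ≤ Real.log D₁ := Real.log_nonneg hD₁1
  have hcf_lb : (1 - ε/2) * (∑ v : V, Real.log (G.degree v))
      ≤ ∑ v : V, (if D₁ ≤ (G.degree v : ℝ) then (1 - ε/4) * Real.log (G.degree v) else 0) := by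
    have hpt : ∀ v : V, (1 - ε/4) * (Real.log (G.degree v) - Real.log D₁)
        ≤ (if D₁ ≤ (G.degree v : ℝ) then (1 - ε/4) * Real.log (G.degree v) else 0) := by
      intro v
      by_cases hdv : D₁ ≤ (G.degree v : ℝ)
      · rw [if_pos hdv]
        nlinarith [hlogv v]
      · rw [if_neg hdv]
        push_neg at hdv
        have hlog : Real.log (G.degree v) ≤ Real.log D₁ :=
          Real.log_le_log (hdegpos v) hdv.le
        nlinarith
    have h1 := Finset.sum_le_sum (fun v (_ : v ∈ Finset.univ) => hpt v)
    have h2 : ∑ v : V, (1 - ε/4) * (Real.log (G.degree v) - Real.log D₁)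
        = (1 - ε/4) * ((∑ v : V, Real.log (G.degree v))
            - (Fintype.card V : ℝ) * Real.log D₁) := by
      rw [← Finset.mul_sum, Finset.sum_sub_distrib, Finset.sum_const, Finset.card_univ,
        nsmul_eq_mul]
    have h3 : (Fintype.card V : ℝ) * Real.log D₁ ≤ (ε/8) * ∑ v : V, Real.log (G.degree v) := by
      have h4 := mul_le_mul_of_nonneg_left hLn (show (0:ℝ) ≤ ε/8 by positivity)
      have h5 : (ε/8) * ((Fintype.card V : ℝ) * ((8/ε) * Real.log D₁))
          = (Fintype.card V : ℝ) * Real.log D₁ := by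
        field_simp
      linarith
    rw [h2] at h1
    have hP : 0 ≤ (Fintype.card V : ℝ) * Real.log D₁ := mul_nonneg hn0.le hlD₁
    nlinarith [hL0, hP, hε.le, hε1]
  -- assemble
  have hAindep : IndepFinset G A := fun u hu w hw => (mem_indSets G).1 hAind u hu w hw
  refine ⟨A, Finset.univ \ A, Finset.disjoint_sdiff, hAindep, ?_, ?_⟩
  · rw [Finset.union_sdiff_of_subset (Finset.subset_univ A)]
    have : Nonempty V := Fintype.card_pos_iff.1 hn
    exact Finset.univ_nonempty
  · have hBcard : (A.card : ℝ) + ((Finset.univ \ A).card : ℝ) = (Fintype.card V : ℝ) := by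
      rw [Finset.card_sdiff_of_subset (Finset.subset_univ A), Finset.card_univ]
      have hA_le : A.card ≤ Fintype.card V := by
        rw [← Finset.card_univ]
        exact Finset.card_le_card (Finset.subset_univ A)
      rw [Nat.cast_sub hA_le]
      ring
    have hEdge : ∑ a ∈ A, ((G.neighborFinset a ∩ (Finset.univ \ A)).card : ℝ)
        = ∑ a ∈ A, (G.degree a : ℝ) := by
      apply Finset.sum_congr rfl
      intro a ha
      have hsub : G.neighborFinset a ∩ (Finset.univ \ A) = G.neighborFinset a := by
        apply Finset.inter_eq_left.2
        intro b hb
        rw [Finset.mem_sdiff]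
        refine ⟨Finset.mem_univ b, fun hbA => ?_⟩
        exact (hAindep a ha b hbA) ((SimpleGraph.mem_neighborFinset G a b).1 hb)
      rw [hsub, SimpleGraph.degree]
    rw [hEdge, hBcard]
    rw [le_div_iff₀ hn0]
    have hfin : (2-ε) * (∑ v : V, Real.log (G.degree v))
        ≤ 2 * (∑ a ∈ A, (G.degree a : ℝ)) := by
      nlinarith [hAw, hcf_lb, hL0]
    calc (2 - ε) * (1 / (Fintype.card V : ℝ) * ∑ v : V, Real.log (G.degree v))
          * (Fintype.card V : ℝ)
        = (2 - ε) * (∑ v : V, Real.log (G.degree v)) := by field_simp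
      _ ≤ 2 * (∑ a ∈ A, (G.degree a : ℝ)) := hfin


/-- Theorem 5 of the paper (in `ε`-form): every triangle-free graph on `n ≥ 1` vertices
whose degree sequence has sufficiently large geometric mean contains a semi-bipartite
induced subgraph (all edges between an independent set `A` and a disjoint set `B`) whose
average degree `2·e(A,B)/(|A|+|B|)` is at least `(2-ε)·(1/n)·Σ_v log deg(v)`. -/
theorem semibipartite_induced_subgraph (ε : ℝ) (hε : 0 < ε) :
    ∃ D : ℝ, 0 < D ∧
      ∀ (V : Type) [Fintype V] [DecidableEq V] (G : SimpleGraph V) [DecidableRel G.Adj],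
        G.CliqueFree 3 → 1 ≤ Fintype.card V →
        D ≤ (∏ v : V, (G.degree v : ℝ)) ^ ((1 : ℝ) / (Fintype.card V : ℝ)) →
        ∃ A B : Finset V, Disjoint A B ∧ IndepFinset G A ∧ (A ∪ B).Nonempty ∧
          (2 - ε) * ((1 / (Fintype.card V : ℝ)) * ∑ v : V, Real.log (G.degree v)) ≤
            2 * (∑ a ∈ A, ((G.neighborFinset a ∩ B).card : ℝ)) /
              ((A.card : ℝ) + (B.card : ℝ)) := by
  obtain ⟨D, hD0, hmain⟩ := main_aux (min ε 1) (lt_min hε one_pos) (min_le_right _ _)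
  refine ⟨D, hD0, ?_⟩
  intro V _ _ G _ h3 hn hGM
  obtain ⟨A, B, hd, hi, hne, h4⟩ := hmain V G h3 hn hGM
  refine ⟨A, B, hd, hi, hne, ?_⟩
  have hX : 0 ≤ (1 / (Fintype.card V : ℝ)) * ∑ v : V, Real.log (G.degree v) := by
    apply mul_nonneg (by positivity)
    apply Finset.sum_nonneg
    intro v _
    rcases Nat.eq_zero_or_pos (G.degree v) with h | h
    · simp [h]
    · exact Real.log_nonneg (by exact_mod_cast h)
  have hcmp : (2 - ε) * ((1 / (Fintype.card V : ℝ)) * ∑ v : V, Real.log (G.degree v))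
      ≤ (2 - min ε 1) * ((1 / (Fintype.card V : ℝ)) * ∑ v : V, Real.log (G.degree v)) := by
    apply mul_le_mul_of_nonneg_right _ hX
    have := min_le_left ε 1
    linarith
  linarith [h4]
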